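/- For every n ≥ 2 and every k with 2 ≤ k ≤ n, both the derivation zₙ² z_{n−1}² ⋯ zₖ² ∂/∂z_{k−1} and the derivation z₁² z₂² ⋯ z_{k−1}² ∂/∂zₖ belong to the smallest Lie subalgebra of the derivations of ℂ[z₁,…,zₙ] containing U, V′ and V″. -/

import Mathlib

open MvPolynomial

/-- The polynomial vector field `f ∂/∂zₖ`: the derivation of `ℂ[z₁,…,zₙ]`
sending the coordinate `zₖ` to `f` and all other coordinates to `0`. -/
noncomputable def der (n : ℕ) (f : MvPolynomial (Fin n) ℂ) (k : Fin n) :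
    Derivation ℂ (MvPolynomial (Fin n) ℂ) (MvPolynomial (Fin n) ℂ) :=
  MvPolynomial.mkDerivation ℂ (Pi.single k f)

/-- `U = ∂/∂zₙ`  (coordinates are `0`-indexed: `zₖ = X ⟨k-1,_⟩`). -/
noncomputable def U (n : ℕ) :
    Derivation ℂ (MvPolynomial (Fin n) ℂ) (MvPolynomial (Fin n) ℂ) :=
  MvPolynomial.mkDerivation ℂ (fun i => if (i : ℕ) = n - 1 then 1 else 0)

/-- `V′ = ∂/∂zₙ + zₙ⁵ ∂/∂z_{n−1} + zₙ² z_{n−1}⁵ ∂/∂z_{n−2} + ⋯ + zₙ² z_{n−1}² ⋯ z₃² z₂⁵ ∂/∂z₁`,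
i.e. `V′(zₙ) = 1` and `V′(zₖ) = zₙ² z_{n−1}² ⋯ z_{k+2}² · z_{k+1}⁵` for `1 ≤ k ≤ n−1`. -/
noncomputable def V' (n : ℕ) :
    Derivation ℂ (MvPolynomial (Fin n) ℂ) (MvPolynomial (Fin n) ℂ) :=
  MvPolynomial.mkDerivation ℂ (fun i =>
    if h : (i : ℕ) + 1 < n then
      (∏ j ∈ Finset.univ.filter (fun j : Fin n => (i : ℕ) + 1 < (j : ℕ)), (X j) ^ 2) *
        (X (⟨(i : ℕ) + 1, h⟩ : Fin n)) ^ 5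
    else 1)

/-- `V″ = ∂/∂z₁ + z₁⁵ ∂/∂z₂ + z₁² z₂⁵ ∂/∂z₃ + ⋯ + z₁² z₂² ⋯ z_{n−2}² z_{n−1}⁵ ∂/∂zₙ`,
i.e. `V″(z₁) = 1` and `V″(zₖ) = z₁² z₂² ⋯ z_{k−2}² · z_{k−1}⁵` for `2 ≤ k ≤ n`. -/
noncomputable def V'' (n : ℕ) :
    Derivation ℂ (MvPolynomial (Fin n) ℂ) (MvPolynomial (Fin n) ℂ) :=
  MvPolynomial.mkDerivation ℂ (fun i =>
    if h : 0 < (i : ℕ) then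
      (∏ j ∈ Finset.univ.filter (fun j : Fin n => (j : ℕ) < (i : ℕ) - 1), (X j) ^ 2) *
        (X (⟨(i : ℕ) - 1, lt_of_le_of_lt (Nat.sub_le _ _) i.isLt⟩ : Fin n)) ^ 5
    else 1)

noncomputable section
variable {n : ℕ}

def Gg (n t : ℕ) : MvPolynomial (Fin n) ℂ :=
  ∏ j ∈ Finset.univ.filter (fun j : Fin n => t ≤ (j : ℕ)), (X j) ^ 2

def Hh (n t : ℕ) : MvPolynomial (Fin n) ℂ :=
  ∏ j ∈ Finset.univ.filter (fun j : Fin n => (j : ℕ) < t), (X j) ^ 2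

lemma pderiv_pow_ne {j m : Fin n} (h : j ≠ m) (e : ℕ) :
    pderiv m ((X j : MvPolynomial (Fin n) ℂ) ^ e) = 0 := by
  induction e with
  | zero => simp
  | succ e ih => rw [pow_succ, pderiv_mul, ih, pderiv_X_of_ne h]; simp

lemma pderiv_prod_sq (m : Fin n) (S : Finset (Fin n)) (h : m ∉ S) :
    pderiv m (∏ j ∈ S, (X j : MvPolynomial (Fin n) ℂ) ^ 2) = 0 := by
  induction S using Finset.induction_on with
  | empty => simp
  | insert _ _ hj ih =>
    rename_i j S
    simp only [Finset.mem_insert, not_or] at h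
    rw [Finset.prod_insert hj, pderiv_mul, pderiv_pow_ne (Ne.symm h.1) 2, ih h.2]
    simp

lemma Gg_pderiv_zero {m : Fin n} {t : ℕ} (h : (m : ℕ) < t) : pderiv m (Gg n t) = 0 :=
  pderiv_prod_sq m _ (by simp; omega)

lemma Hh_pderiv_zero {m : Fin n} {t : ℕ} (h : t ≤ (m : ℕ)) : pderiv m (Hh n t) = 0 :=
  pderiv_prod_sq m _ (by simp; omega)

lemma Gg_split {m : Fin n} {t : ℕ} (h : t ≤ (m : ℕ)) :
    ∃ r : MvPolynomial (Fin n) ℂ, Gg n t = X m * X m * r ∧ pderiv m r = 0 := by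
  have hm : m ∈ Finset.univ.filter (fun j : Fin n => t ≤ (j : ℕ)) := by simp [h]
  refine ⟨∏ j ∈ (Finset.univ.filter (fun j : Fin n => t ≤ (j : ℕ))).erase m,
    (X j : MvPolynomial (Fin n) ℂ) ^ 2, ?_, pderiv_prod_sq m _ (Finset.notMem_erase m _)⟩
  rw [Gg, ← Finset.mul_prod_erase _ _ hm]
  try ring

lemma Hh_split {m : Fin n} {t : ℕ} (h : (m : ℕ) < t) :
    ∃ r : MvPolynomial (Fin n) ℂ, Hh n t = X m * X m * r ∧ pderiv m r = 0 := by
  have hm : m ∈ Finset.univ.filter (fun j : Fin n => (j : ℕ) < t) := by simp [h]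
  refine ⟨∏ j ∈ (Finset.univ.filter (fun j : Fin n => (j : ℕ) < t)).erase m,
    (X j : MvPolynomial (Fin n) ℂ) ^ 2, ?_, pderiv_prod_sq m _ (Finset.notMem_erase m _)⟩
  rw [Hh, ← Finset.mul_prod_erase _ _ hm]
  try ring

lemma Gg_succ {t : ℕ} (ht : t < n) :
    Gg n t = X (⟨t, ht⟩ : Fin n) * X (⟨t, ht⟩ : Fin n) * Gg n (t + 1) := by
  rw [show (X (⟨t, ht⟩ : Fin n) : MvPolynomial (Fin n) ℂ) * X ⟨t, ht⟩ = X ⟨t, ht⟩ ^ 2 from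
      (sq _).symm, Gg, Gg,
    show Finset.univ.filter (fun j : Fin n => t ≤ (j : ℕ))
        = insert (⟨t, ht⟩ : Fin n)
            (Finset.univ.filter (fun j : Fin n => t + 1 ≤ (j : ℕ))) from by
      ext j; simp [Fin.ext_iff]; omega,
    Finset.prod_insert (by simp)]

lemma Hh_succ {t : ℕ} (ht : t < n) :
    Hh n (t + 1) = X (⟨t, ht⟩ : Fin n) * X (⟨t, ht⟩ : Fin n) * Hh n t := by
  rw [show (X (⟨t, ht⟩ : Fin n) : MvPolynomial (Fin n) ℂ) * X ⟨t, ht⟩ = X ⟨t, ht⟩ ^ 2 from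
      (sq _).symm, Hh, Hh,
    show Finset.univ.filter (fun j : Fin n => (j : ℕ) < t + 1)
        = insert (⟨t, ht⟩ : Fin n)
            (Finset.univ.filter (fun j : Fin n => (j : ℕ) < t)) from by
      ext j; simp [Fin.ext_iff]; omega,
    Finset.prod_insert (by simp)]

lemma Gg_top {t : ℕ} (h : n ≤ t) : Gg n t = 1 := by
  rw [Gg, Finset.filter_false_of_mem (fun j _ => by have := j.isLt; omega), Finset.prod_empty]

lemma pd2_sq {m : Fin n} {g : MvPolynomial (Fin n) ℂ} (hg : pderiv m g = 0) :
    pderiv m (pderiv m (X m * X m * g)) = (2 : ℂ) • g := by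
  rw [smul_eq_C_mul, map_ofNat]
  simp only [pderiv_mul, pderiv_X_self, hg, map_add, pderiv_one, mul_zero, zero_mul,
    add_zero, zero_add, one_mul, mul_one]
  try ring

lemma pd3_sq {m : Fin n} {g : MvPolynomial (Fin n) ℂ} (hg : pderiv m g = 0) :
    pderiv m (pderiv m (pderiv m (X m * X m * g))) = 0 := by
  simp only [pderiv_mul, pderiv_X_self, hg, map_add, pderiv_one, mul_zero, zero_mul,
    add_zero, zero_add, one_mul, mul_one]
  try ring

lemma pd3_five {m : Fin n} {g : MvPolynomial (Fin n) ℂ} (hg : pderiv m g = 0) :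
    pderiv m (pderiv m (pderiv m (X m * X m * X m * X m * X m * g)))
      = (60 : ℂ) • (X m * X m * g) := by
  rw [smul_eq_C_mul, map_ofNat]
  simp only [pderiv_mul, pderiv_X_self, hg, map_add, pderiv_one, mul_zero, zero_mul,
    add_zero, zero_add, one_mul, mul_one]
  try ring

lemma pd5_five {m : Fin n} {g : MvPolynomial (Fin n) ℂ} (hg : pderiv m g = 0) :
    pderiv m (pderiv m (pderiv m (pderiv m (pderiv m
      (X m * X m * X m * X m * X m * g))))) = (120 : ℂ) • g := by
  rw [smul_eq_C_mul, map_ofNat]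
  simp only [pderiv_mul, pderiv_X_self, hg, map_add, pderiv_one, mul_zero, zero_mul,
    add_zero, zero_add, one_mul, mul_one]
  try ring

lemma lie_pderiv_mkDerivation (m : Fin n) (v : Fin n → MvPolynomial (Fin n) ℂ) :
    ⁅(pderiv m : Derivation ℂ (MvPolynomial (Fin n) ℂ) (MvPolynomial (Fin n) ℂ)),
      mkDerivation ℂ v⁆ = mkDerivation ℂ (fun k => pderiv m (v k)) := by
  apply derivation_ext
  intro k
  rw [Derivation.commutator_apply, mkDerivation_X, mkDerivation_X]
  rcases eq_or_ne k m with rfl | h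
  · rw [pderiv_X_self]; simp
  · rw [pderiv_X_of_ne h]; simp

/-- The coefficient vector of `V'`, in `Gg` form. -/
noncomputable def vA (n : ℕ) : Fin n → MvPolynomial (Fin n) ℂ := fun k =>
  if h : (k : ℕ) + 1 < n then Gg n ((k : ℕ) + 2) * (X (⟨(k : ℕ) + 1, h⟩ : Fin n)) ^ 5 else 1

/-- The coefficient vector of `V''`, in `Hh` form. -/
noncomputable def vB (n : ℕ) : Fin n → MvPolynomial (Fin n) ℂ := fun k =>
  if h : 0 < (k : ℕ) then
    Hh n ((k : ℕ) - 1) *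
      (X (⟨(k : ℕ) - 1, lt_of_le_of_lt (Nat.sub_le _ _) k.isLt⟩ : Fin n)) ^ 5
  else 1

lemma der_def (n : ℕ) (f : MvPolynomial (Fin n) ℂ) (k : Fin n) :
    der n f k = MvPolynomial.mkDerivation ℂ (Pi.single k f) := rfl

lemma V'_eq (n : ℕ) : V' n = mkDerivation ℂ (vA n) := by
  unfold V' vA Gg
  rfl

lemma V''_eq (n : ℕ) : V'' n = mkDerivation ℂ (vB n) := rfl

lemma der_one_eq_pderiv (n : ℕ) (i : Fin n) :
    der n 1 i = (pderiv i : Derivation ℂ (MvPolynomial (Fin n) ℂ) (MvPolynomial (Fin n) ℂ)) :=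
  (pderiv_def i).symm

lemma der_eq_inv_smul {c : ℂ} (hc : c ≠ 0) {f : MvPolynomial (Fin n) ℂ} {k : Fin n}
    {w : Fin n → MvPolynomial (Fin n) ℂ}
    (h : ∀ j, w j = c • (Pi.single k f : Fin n → MvPolynomial (Fin n) ℂ) j) :
    der n f k = c⁻¹ • mkDerivation ℂ w := by
  apply derivation_ext
  intro j
  rw [der_def, mkDerivation_X, Derivation.smul_apply, mkDerivation_X, h j, smul_smul,
    inv_mul_cancel₀ hc, one_smul]

lemma compA (n : ℕ) (i : Fin n) (hi : 1 ≤ (i : ℕ)) (j : Fin n) :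
    pderiv i (pderiv i (pderiv i (vA n j)))
      = (60 : ℂ) • (Pi.single (⟨(i : ℕ) - 1, lt_of_le_of_lt (Nat.sub_le _ _) i.isLt⟩ : Fin n)
          (Gg n (i : ℕ)) : Fin n → MvPolynomial (Fin n) ℂ) j := by
  unfold vA
  by_cases hj : (j : ℕ) + 1 < n
  · rw [dif_pos hj]
    rcases lt_trichotomy ((j : ℕ) + 1) (i : ℕ) with h | h | h
    · obtain ⟨r, hr, hr0⟩ := Gg_split (m := i) (t := (j : ℕ) + 2) (by omega)
      have hne : (⟨(j : ℕ) + 1, hj⟩ : Fin n) ≠ i := by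
        apply Fin.ne_of_val_ne; show (j : ℕ) + 1 ≠ (i : ℕ); omega
      have h0 : pderiv i (r * X (⟨(j : ℕ) + 1, hj⟩ : Fin n) ^ 5) = 0 := by
        rw [pderiv_mul, hr0, pderiv_pow_ne hne]; simp
      rw [hr, show X i * X i * r * X (⟨(j : ℕ) + 1, hj⟩ : Fin n) ^ 5
            = X i * X i * (r * X (⟨(j : ℕ) + 1, hj⟩ : Fin n) ^ 5) from by ring,
        pd3_sq h0, Pi.single_eq_of_ne
          (by apply Fin.ne_of_val_ne; show (j : ℕ) ≠ (i : ℕ) - 1; omega), smul_zero]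
    · have hji : (⟨(j : ℕ) + 1, hj⟩ : Fin n) = i := by
        apply Fin.ext; show (j : ℕ) + 1 = (i : ℕ); omega
      have h0 : pderiv i (Gg n ((j : ℕ) + 2)) = 0 := Gg_pderiv_zero (by omega)
      rw [hji, show Gg n ((j : ℕ) + 2) * X i ^ 5
            = X i * X i * X i * X i * X i * Gg n ((j : ℕ) + 2) from by ring,
        pd3_five h0, show (j : ℕ) + 2 = (i : ℕ) + 1 from by omega,
        show j = (⟨(i : ℕ) - 1, lt_of_le_of_lt (Nat.sub_le _ _) i.isLt⟩ : Fin n) from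
          Fin.ext (show (j : ℕ) = (i : ℕ) - 1 by omega),
        Pi.single_eq_same]
      congr 1
      rw [Gg_succ (i.isLt)]
    · have h0 : pderiv i (Gg n ((j : ℕ) + 2) * X (⟨(j : ℕ) + 1, hj⟩ : Fin n) ^ 5) = 0 := by
        rw [pderiv_mul, Gg_pderiv_zero (by omega), pderiv_pow_ne
          (by apply Fin.ne_of_val_ne; show (j : ℕ) + 1 ≠ (i : ℕ); omega)]
        simp
      rw [h0, map_zero, map_zero, Pi.single_eq_of_ne
        (by apply Fin.ne_of_val_ne; show (j : ℕ) ≠ (i : ℕ) - 1; omega), smul_zero]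
  · have hne : j ≠ (⟨(i : ℕ) - 1, lt_of_le_of_lt (Nat.sub_le _ _) i.isLt⟩ : Fin n) := by
      apply Fin.ne_of_val_ne
      show (j : ℕ) ≠ (i : ℕ) - 1
      have := j.isLt; have := i.isLt; omega
    rw [dif_neg hj, pderiv_one, map_zero, map_zero, Pi.single_eq_of_ne hne, smul_zero]

lemma compB (n : ℕ) (i : Fin n) (hi : 1 ≤ (i : ℕ)) (j : Fin n) :
    pderiv (⟨(i : ℕ) - 1, lt_of_le_of_lt (Nat.sub_le _ _) i.isLt⟩ : Fin n)
        (pderiv (⟨(i : ℕ) - 1, lt_of_le_of_lt (Nat.sub_le _ _) i.isLt⟩ : Fin n)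
          (pderiv (⟨(i : ℕ) - 1, lt_of_le_of_lt (Nat.sub_le _ _) i.isLt⟩ : Fin n) (vB n j)))
      = (60 : ℂ) • (Pi.single i (Hh n (i : ℕ)) : Fin n → MvPolynomial (Fin n) ℂ) j := by
  set p : Fin n := ⟨(i : ℕ) - 1, lt_of_le_of_lt (Nat.sub_le _ _) i.isLt⟩ with hp
  have hpv : (p : ℕ) = (i : ℕ) - 1 := rfl
  unfold vB
  by_cases hj : 0 < (j : ℕ)
  · rw [dif_pos hj]
    rcases lt_trichotomy (j : ℕ) (i : ℕ) with h | h | h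
    · -- j < i : no X_p present
      have h0 : pderiv p (Hh n ((j : ℕ) - 1) *
          X (⟨(j : ℕ) - 1, lt_of_le_of_lt (Nat.sub_le _ _) j.isLt⟩ : Fin n) ^ 5) = 0 := by
        rw [pderiv_mul, Hh_pderiv_zero (by rw [hpv]; omega), pderiv_pow_ne
          (by apply Fin.ne_of_val_ne; show (j : ℕ) - 1 ≠ (p : ℕ); rw [hpv]; omega)]
        simp
      rw [h0, map_zero, map_zero, Pi.single_eq_of_ne
        (by apply Fin.ne_of_val_ne; show (j : ℕ) ≠ (i : ℕ); omega), smul_zero]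
    · -- j = i
      have hji : (⟨(j : ℕ) - 1, lt_of_le_of_lt (Nat.sub_le _ _) j.isLt⟩ : Fin n) = p := by
        apply Fin.ext; show (j : ℕ) - 1 = (p : ℕ); rw [hpv]; omega
      have h0 : pderiv p (Hh n ((j : ℕ) - 1)) = 0 := Hh_pderiv_zero (by rw [hpv]; omega)
      rw [hji, show Hh n ((j : ℕ) - 1) * X p ^ 5
            = X p * X p * X p * X p * X p * Hh n ((j : ℕ) - 1) from by ring,
        pd3_five h0, show (j : ℕ) - 1 = (i : ℕ) - 1 from by omega,
        show j = i from Fin.ext h, Pi.single_eq_same]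
      congr 1
      conv_rhs => rw [show (i : ℕ) = ((i : ℕ) - 1) + 1 from by omega,
        Hh_succ (show (i : ℕ) - 1 < n from lt_of_le_of_lt (Nat.sub_le _ _) i.isLt)]
    · -- j > i : X_p appears squared in Hh n (j-1)
      obtain ⟨r, hr, hr0⟩ := Hh_split (m := p) (t := (j : ℕ) - 1) (by rw [hpv]; omega)
      have hne : (⟨(j : ℕ) - 1, lt_of_le_of_lt (Nat.sub_le _ _) j.isLt⟩ : Fin n) ≠ p := by
        apply Fin.ne_of_val_ne; show (j : ℕ) - 1 ≠ (p : ℕ); rw [hpv]; omega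
      have h0 : pderiv p (r *
          X (⟨(j : ℕ) - 1, lt_of_le_of_lt (Nat.sub_le _ _) j.isLt⟩ : Fin n) ^ 5) = 0 := by
        rw [pderiv_mul, hr0, pderiv_pow_ne hne]; simp
      rw [hr, show X p * X p * r *
            X (⟨(j : ℕ) - 1, lt_of_le_of_lt (Nat.sub_le _ _) j.isLt⟩ : Fin n) ^ 5
            = X p * X p * (r *
              X (⟨(j : ℕ) - 1, lt_of_le_of_lt (Nat.sub_le _ _) j.isLt⟩ : Fin n) ^ 5) from
          by ring,
        pd3_sq h0, Pi.single_eq_of_ne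
          (by apply Fin.ne_of_val_ne; show (j : ℕ) ≠ (i : ℕ); omega), smul_zero]
  · rw [dif_neg hj, pderiv_one, map_zero, map_zero, Pi.single_eq_of_ne
      (by apply Fin.ne_of_val_ne; show (j : ℕ) ≠ (i : ℕ); omega), smul_zero]

lemma compC (n : ℕ) (i : Fin n) (hL : (i : ℕ) + 1 < n) (j : Fin n) :
    pderiv (⟨(i : ℕ) + 1, hL⟩ : Fin n) (pderiv (⟨(i : ℕ) + 1, hL⟩ : Fin n)
        (pderiv (⟨(i : ℕ) + 1, hL⟩ : Fin n) (pderiv (⟨(i : ℕ) + 1, hL⟩ : Fin n)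
          (pderiv (⟨(i : ℕ) + 1, hL⟩ : Fin n) (vA n j)))))
      = (120 : ℂ) • (Pi.single i (Gg n ((i : ℕ) + 2)) : Fin n → MvPolynomial (Fin n) ℂ) j := by
  set m : Fin n := ⟨(i : ℕ) + 1, hL⟩ with hm
  have hmv : (m : ℕ) = (i : ℕ) + 1 := rfl
  unfold vA
  by_cases hj : (j : ℕ) + 1 < n
  · rw [dif_pos hj]
    rcases lt_trichotomy (j : ℕ) (i : ℕ) with h | h | h
    · obtain ⟨r, hr, hr0⟩ := Gg_split (m := m) (t := (j : ℕ) + 2) (by rw [hmv]; omega)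
      have hne : (⟨(j : ℕ) + 1, hj⟩ : Fin n) ≠ m := by
        apply Fin.ne_of_val_ne; show (j : ℕ) + 1 ≠ (m : ℕ); rw [hmv]; omega
      have h0 : pderiv m (r * X (⟨(j : ℕ) + 1, hj⟩ : Fin n) ^ 5) = 0 := by
        rw [pderiv_mul, hr0, pderiv_pow_ne hne]; simp
      rw [hr, show X m * X m * r * X (⟨(j : ℕ) + 1, hj⟩ : Fin n) ^ 5
            = X m * X m * (r * X (⟨(j : ℕ) + 1, hj⟩ : Fin n) ^ 5) from by ring,
        pd3_sq h0, map_zero, map_zero, Pi.single_eq_of_ne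
          (by apply Fin.ne_of_val_ne; show (j : ℕ) ≠ (i : ℕ); omega), smul_zero]
    · have hji : (⟨(j : ℕ) + 1, hj⟩ : Fin n) = m := by
        apply Fin.ext; show (j : ℕ) + 1 = (m : ℕ); rw [hmv]; omega
      have h0 : pderiv m (Gg n ((j : ℕ) + 2)) = 0 := Gg_pderiv_zero (by rw [hmv]; omega)
      rw [hji, show Gg n ((j : ℕ) + 2) * X m ^ 5
            = X m * X m * X m * X m * X m * Gg n ((j : ℕ) + 2) from by ring,
        pd5_five h0, show (j : ℕ) + 2 = (i : ℕ) + 2 from by omega,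
        show j = i from Fin.ext h, Pi.single_eq_same]
    · have h0 : pderiv m (Gg n ((j : ℕ) + 2) * X (⟨(j : ℕ) + 1, hj⟩ : Fin n) ^ 5) = 0 := by
        rw [pderiv_mul, Gg_pderiv_zero (by rw [hmv]; omega), pderiv_pow_ne
          (by apply Fin.ne_of_val_ne; show (j : ℕ) + 1 ≠ (m : ℕ); rw [hmv]; omega)]
        simp
      rw [h0, map_zero, map_zero, map_zero, map_zero, Pi.single_eq_of_ne
        (by apply Fin.ne_of_val_ne; show (j : ℕ) ≠ (i : ℕ); omega), smul_zero]
  · rw [dif_neg hj, pderiv_one, map_zero, map_zero, map_zero, map_zero, Pi.single_eq_of_ne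
      (by apply Fin.ne_of_val_ne; show (j : ℕ) ≠ (i : ℕ); have := j.isLt; omega), smul_zero]

lemma compD (n : ℕ) (m i : Fin n) (hmi : m ≠ i) (j : Fin n) :
    pderiv m (pderiv m ((Pi.single i (Gg n (m : ℕ)) : Fin n → MvPolynomial (Fin n) ℂ) j))
      = (2 : ℂ) • (Pi.single i (Gg n ((m : ℕ) + 1)) : Fin n → MvPolynomial (Fin n) ℂ) j := by
  rcases eq_or_ne j i with rfl | h
  · rw [Pi.single_eq_same, Pi.single_eq_same, Gg_succ m.isLt]
    simp only [Fin.eta]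
    rw [pd2_sq (Gg_pderiv_zero (Nat.lt_succ_self _))]
  · rw [Pi.single_eq_of_ne h, Pi.single_eq_of_ne h, map_zero, map_zero, smul_zero]

noncomputable abbrev LL (n : ℕ) :
    LieSubalgebra ℂ (Derivation ℂ (MvPolynomial (Fin n) ℂ) (MvPolynomial (Fin n) ℂ)) :=
  LieSubalgebra.lieSpan ℂ (Derivation ℂ (MvPolynomial (Fin n) ℂ) (MvPolynomial (Fin n) ℂ))
    {U n, V' n, V'' n}

lemma V'_mem : V' n ∈ LL n := LieSubalgebra.subset_lieSpan (by simp)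

lemma V''_mem : V'' n ∈ LL n := LieSubalgebra.subset_lieSpan (by simp)

lemma lie_pderiv_mem {m : Fin n} (hm : (pderiv m :
      Derivation ℂ (MvPolynomial (Fin n) ℂ) (MvPolynomial (Fin n) ℂ)) ∈ LL n)
    {v : Fin n → MvPolynomial (Fin n) ℂ} (hv : mkDerivation ℂ v ∈ LL n) :
    mkDerivation ℂ (fun k => pderiv m (v k)) ∈ LL n := by
  rw [← lie_pderiv_mkDerivation]
  exact (LL n).lie_mem hm hv

lemma mem_of_eq_inv_smul {c : ℂ} (hc : c ≠ 0) {f : MvPolynomial (Fin n) ℂ} {k : Fin n}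
    {w : Fin n → MvPolynomial (Fin n) ℂ}
    (h : ∀ j, w j = c • (Pi.single k f : Fin n → MvPolynomial (Fin n) ℂ) j)
    (hw : mkDerivation ℂ w ∈ LL n) : der n f k ∈ LL n := by
  rw [der_eq_inv_smul hc h]
  exact (LL n).smul_mem _ hw

lemma pderiv_last_mem (i : Fin n) (hi : (i : ℕ) = n - 1) :
    (pderiv i : Derivation ℂ (MvPolynomial (Fin n) ℂ) (MvPolynomial (Fin n) ℂ)) ∈ LL n := by
  have hU : (pderiv i : Derivation ℂ (MvPolynomial (Fin n) ℂ) (MvPolynomial (Fin n) ℂ))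
      = U n := by
    have hU' : U n = mkDerivation ℂ
        (fun k : Fin n => if (k : ℕ) = n - 1 then 1 else 0) := rfl
    apply derivation_ext
    intro k
    rw [hU', mkDerivation_X]
    rcases eq_or_ne k i with rfl | h
    · rw [pderiv_X_self, if_pos hi]
    · rw [pderiv_X_of_ne h, if_neg (fun hc => h (Fin.ext (by omega)))]
  rw [hU]
  exact LieSubalgebra.subset_lieSpan (by simp)

lemma vA_mem : mkDerivation ℂ (vA n) ∈ LL n := by rw [← V'_eq]; exact V'_mem

lemma vB_mem : mkDerivation ℂ (vB n) ∈ LL n := by rw [← V''_eq]; exact V''_mem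

lemma pderiv_mem (n : ℕ) (hn : 2 ≤ n) (i : Fin n) :
    (pderiv i : Derivation ℂ (MvPolynomial (Fin n) ℂ) (MvPolynomial (Fin n) ℂ)) ∈ LL n := by
  suffices key : ∀ m : ℕ, ∀ i : Fin n, n ≤ (i : ℕ) + 1 + m →
      (pderiv i : Derivation ℂ (MvPolynomial (Fin n) ℂ) (MvPolynomial (Fin n) ℂ)) ∈ LL n by
    exact key n i (by omega)
  intro m
  induction m with
  | zero =>
    intro i hi
    exact pderiv_last_mem i (by have := i.isLt; omega)
  | succ m ih =>
    intro i hi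
    by_cases hC : n ≤ (i : ℕ) + 1
    · exact pderiv_last_mem i (by have := i.isLt; omega)
    · push_neg at hC
      have h1 : (pderiv (⟨(i : ℕ) + 1, hC⟩ : Fin n) :
          Derivation ℂ (MvPolynomial (Fin n) ℂ) (MvPolynomial (Fin n) ℂ)) ∈ LL n :=
        ih _ (by show n ≤ (i : ℕ) + 1 + 1 + m; omega)
      have h5 : mkDerivation ℂ (fun j => pderiv (⟨(i : ℕ) + 1, hC⟩ : Fin n)
          (pderiv (⟨(i : ℕ) + 1, hC⟩ : Fin n) (pderiv (⟨(i : ℕ) + 1, hC⟩ : Fin n)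
            (pderiv (⟨(i : ℕ) + 1, hC⟩ : Fin n)
              (pderiv (⟨(i : ℕ) + 1, hC⟩ : Fin n) (vA n j)))))) ∈ LL n :=
        lie_pderiv_mem h1 (lie_pderiv_mem h1 (lie_pderiv_mem h1
          (lie_pderiv_mem h1 (lie_pderiv_mem h1 vA_mem))))
      have hG : der n (Gg n ((i : ℕ) + 2)) i ∈ LL n :=
        mem_of_eq_inv_smul (show (120 : ℂ) ≠ 0 by norm_num) (compC n i hC) h5
      have strip : ∀ s : ℕ, (i : ℕ) + 2 + s ≤ n → der n (Gg n ((i : ℕ) + 2 + s)) i ∈ LL n := by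
        intro s
        induction s with
        | zero => exact fun _ => hG
        | succ s ihs =>
          intro hs
          have htn : (i : ℕ) + 2 + s < n := by omega
          have hm : (pderiv (⟨(i : ℕ) + 2 + s, htn⟩ : Fin n) :
              Derivation ℂ (MvPolynomial (Fin n) ℂ) (MvPolynomial (Fin n) ℂ)) ∈ LL n :=
            ih _ (by show n ≤ (i : ℕ) + 2 + s + 1 + m; omega)
          have hprev := ihs (by omega)
          have hb : mkDerivation ℂ (fun j => pderiv (⟨(i : ℕ) + 2 + s, htn⟩ : Fin n)
              (pderiv (⟨(i : ℕ) + 2 + s, htn⟩ : Fin n)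
                ((Pi.single i (Gg n ((i : ℕ) + 2 + s)) : Fin n → MvPolynomial (Fin n) ℂ) j)))
              ∈ LL n := by
            apply lie_pderiv_mem hm
            apply lie_pderiv_mem hm
            rw [← der_def]
            exact hprev
          exact mem_of_eq_inv_smul (show (2 : ℂ) ≠ 0 by norm_num)
            (compD n ⟨(i : ℕ) + 2 + s, htn⟩ i
              (by apply Fin.ne_of_val_ne; show (i : ℕ) + 2 + s ≠ (i : ℕ); omega)) hb
      obtain ⟨s, hs⟩ := Nat.le.dest (show (i : ℕ) + 2 ≤ n from hC)
      have hfin := strip s (by omega)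
      rw [hs, Gg_top (le_refl n)] at hfin
      rw [← der_one_eq_pderiv]
      exact hfin

/-- For every `n ≥ 2` and every `k` with `2 ≤ k ≤ n`, both `zₙ² z_{n−1}² ⋯ zₖ² ∂/∂z_{k−1}`
and `z₁² z₂² ⋯ z_{k−1}² ∂/∂zₖ` lie in the smallest Lie subalgebra of the derivations of
`ℂ[z₁,…,zₙ]` containing `U`, `V′`, `V″`.  (`0`-indexed: `i = k − 1 ≥ 1`.) -/
theorem square_products_mem_lieSpan_UV'V'' (n : ℕ) (hn : 2 ≤ n) (i : Fin n)
    (hi : 1 ≤ (i : ℕ)) :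
    der n (∏ j ∈ Finset.univ.filter (fun j : Fin n => (i : ℕ) ≤ (j : ℕ)), (X j) ^ 2)
        (⟨(i : ℕ) - 1, lt_of_le_of_lt (Nat.sub_le _ _) i.isLt⟩ : Fin n) ∈
      LieSubalgebra.lieSpan ℂ (Derivation ℂ (MvPolynomial (Fin n) ℂ) (MvPolynomial (Fin n) ℂ))
        {U n, V' n, V'' n} ∧
    der n (∏ j ∈ Finset.univ.filter (fun j : Fin n => (j : ℕ) < (i : ℕ)), (X j) ^ 2) i ∈
      LieSubalgebra.lieSpan ℂ (Derivation ℂ (MvPolynomial (Fin n) ℂ) (MvPolynomial (Fin n) ℂ))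
        {U n, V' n, V'' n} := by
  constructor
  · have hp : (pderiv i : Derivation ℂ (MvPolynomial (Fin n) ℂ) (MvPolynomial (Fin n) ℂ))
        ∈ LL n := pderiv_mem n hn i
    have h3 : mkDerivation ℂ (fun j => pderiv i (pderiv i (pderiv i (vA n j)))) ∈ LL n :=
      lie_pderiv_mem hp (lie_pderiv_mem hp (lie_pderiv_mem hp vA_mem))
    exact mem_of_eq_inv_smul (show (60 : ℂ) ≠ 0 by norm_num) (compA n i hi) h3
  · have hp : (pderiv (⟨(i : ℕ) - 1, lt_of_le_of_lt (Nat.sub_le _ _) i.isLt⟩ : Fin n) :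
        Derivation ℂ (MvPolynomial (Fin n) ℂ) (MvPolynomial (Fin n) ℂ)) ∈ LL n :=
      pderiv_mem n hn _
    have h3 : mkDerivation ℂ (fun j =>
        pderiv (⟨(i : ℕ) - 1, lt_of_le_of_lt (Nat.sub_le _ _) i.isLt⟩ : Fin n)
          (pderiv (⟨(i : ℕ) - 1, lt_of_le_of_lt (Nat.sub_le _ _) i.isLt⟩ : Fin n)
            (pderiv (⟨(i : ℕ) - 1, lt_of_le_of_lt (Nat.sub_le _ _) i.isLt⟩ : Fin n)
              (vB n j)))) ∈ LL n :=
      lie_pderiv_mem hp (lie_pderiv_mem hp (lie_pderiv_mem hp vB_mem))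
    exact mem_of_eq_inv_smul (show (60 : ℂ) ≠ 0 by norm_num) (compB n i hi) h3
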